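/- The function ξ(θ) = t ∫_{(0,a]} (e^{θy} − 1 − θy) Λ(dy) is finite and twice differentiable on ℝ, with ξ'(θ) = t ∫_{(0,a]} y(e^{θy} − 1) Λ(dy) strictly increasing, ξ'(0) = 0 and ξ'(θ) → ∞ as θ → ∞; hence for every x>0 there is a unique η(x) > 0 with ξ'(η(x)) = x, and for every b>0 one has the identity ξ(η(b)) − η(b)·b = −∫_0^b η(x) dx; in particular inf_{θ>0} exp( ξ(θ) − θb ) ≤ exp( −∫_0^b η(x) dx ). -/

import Mathlib

open MeasureTheory Filter Set Topology

noncomputable section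

/-- Upper tail of the Lévy measure: `Λ̄₊(x) = Λ((x,∞))`. -/
def upperTail (Λ : Measure ℝ) (x : ℝ) : ℝ := (Λ (Set.Ioi x)).toReal

/-- Lower tail of the Lévy measure: `Λ̄₋(x) = Λ((−∞,−x))`. -/
def lowerTail (Λ : Measure ℝ) (x : ℝ) : ℝ := (Λ (Set.Iio (-x))).toReal

/-- `φ(u) = sup {x > 0 : Λ̄₊(x) > u}` for a general tail function `G`. -/
def phiOf (G : ℝ → ℝ) (u : ℝ) : ℝ := sSup {x : ℝ | 0 < x ∧ G x > u}

/-- The norming function `a(t) = φ(1/t)` built from a tail function `G`. -/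
def normOf (G : ℝ → ℝ) (t : ℝ) : ℝ := phiOf G (1 / t)

/-- The norming function `a(t)` of a Lévy measure. -/
def normFn (Λ : Measure ℝ) (t : ℝ) : ℝ := normOf (upperTail Λ) t

/-- `γ₊ = ∫_{(0,1]} y Λ(dy)` when finite, `0` otherwise. -/
def gammaPlus (Λ : Measure ℝ) : ℝ :=
  if (∫⁻ y in Set.Ioc (0:ℝ) 1, ENNReal.ofReal y ∂Λ) < ⊤ then
    ∫ y in Set.Ioc (0:ℝ) 1, y ∂Λ
  else 0

/-- `γ₋ = ∫_{[−1,0)} y Λ(dy)` when `∫_{[−1,0)} |y| Λ(dy) < ∞`, `0` otherwise. -/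
def gammaMinus (Λ : Measure ℝ) : ℝ :=
  if (∫⁻ y in Set.Ico (-1:ℝ) 0, ENNReal.ofReal (-y) ∂Λ) < ⊤ then
    ∫ y in Set.Ico (-1:ℝ) 0, y ∂Λ
  else 0

/-- `ℓ` is slowly varying at `0`: `ℓ(λ t)/ℓ(t) → 1` as `t ↓ 0`, for every `λ > 0`. -/
def SlowlyVaryingAtZero (ℓ : ℝ → ℝ) : Prop :=
  ∀ lam : ℝ, 0 < lam →
    Tendsto (fun t => ℓ (lam * t) / ℓ t) (𝓝[>] (0:ℝ)) (𝓝 1)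

/-- `ℓ` is super-slowly varying at `0` with auxiliary function `ξ(t) = (−log t)⁻¹`:
for some `Δ > 0`, `ℓ(t ξ(t)^δ)/ℓ(t) → 1` as `t ↓ 0`, uniformly in `δ ∈ [0,Δ]`. -/
def SuperSlowlyVaryingAtZero (ℓ : ℝ → ℝ) : Prop :=
  ∃ Δ : ℝ, 0 < Δ ∧ ∀ ε : ℝ, 0 < ε → ∃ t₀ : ℝ, 0 < t₀ ∧
    ∀ t : ℝ, 0 < t → t < t₀ → ∀ δ : ℝ, 0 ≤ δ → δ ≤ Δ →
      |ℓ (t * ((-Real.log t)⁻¹) ^ δ) / ℓ t - 1| < ε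

/-- A real-valued Lévy process without Gaussian component, with drift `γ` and
Lévy measure `Λ`: càdlàg paths starting at `0`, stationary independent increments,
and the Lévy–Khintchine characteristic function. -/
structure IsLevyNoGauss {Ω : Type*} [MeasurableSpace Ω] (P : Measure Ω)
    (X : ℝ → Ω → ℝ) (γ : ℝ) (Λ : Measure ℝ) : Prop where
  meas : ∀ t : ℝ, Measurable (X t)
  init : ∀ᵐ ω ∂P, X 0 ω = 0
  right_cont : ∀ᵐ ω ∂P, ∀ t : ℝ, 0 ≤ t →
    Tendsto (fun s => X s ω) (𝓝[≥] t) (𝓝 (X t ω))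
  left_lim : ∀ᵐ ω ∂P, ∀ t : ℝ, 0 < t →
    ∃ l : ℝ, Tendsto (fun s => X s ω) (𝓝[<] t) (𝓝 l)
  stationary : ∀ s t : ℝ, 0 ≤ s → 0 ≤ t →
    Measure.map (fun ω => X (s + t) ω - X s ω) P = Measure.map (X t) P
  indep : ∀ (n : ℕ) (τ : Fin (n + 1) → ℝ), (∀ i, 0 ≤ τ i) → Monotone τ →
    ProbabilityTheory.iIndepFun (m := fun _ => Real.measurableSpace)
      (fun i : Fin n => fun ω => X (τ i.succ) ω - X (τ i.castSucc) ω) P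
  levy_integrability : (∫⁻ y, ENNReal.ofReal (min 1 (y ^ 2)) ∂Λ) < ⊤
  no_atom_zero : Λ {0} = 0
  char_fun : ∀ (u t : ℝ), 0 ≤ t →
    ∫ ω, Complex.exp (Complex.I * u * X t ω) ∂P =
      Complex.exp (t * (Complex.I * γ * u +
        ∫ y : ℝ, (Complex.exp (Complex.I * u * y) - 1 -
          Complex.I * u * Set.indicator {y : ℝ | |y| ≤ 1} (fun y => (y : ℂ)) y) ∂Λ))

variable {Ω : Type*} [MeasurableSpace Ω]

/-- Running supremum `X̄_t = sup_{0 ≤ s ≤ t} X_s`. -/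
def runSup (X : ℝ → Ω → ℝ) (t : ℝ) (ω : Ω) : ℝ :=
  sSup ((fun s => X s ω) '' Set.Icc 0 t)

/-- The jump `ΔX_s = X_s − X_{s−}`. -/
def jump (X : ℝ → Ω → ℝ) (s : ℝ) (ω : Ω) : ℝ :=
  X s ω - Function.leftLim (fun u => X u ω) s

/-- Maximal jump `m_t = sup_{0 < s ≤ t} ΔX_s`. -/
def maxJump (X : ℝ → Ω → ℝ) (t : ℝ) (ω : Ω) : ℝ :=
  sSup ((fun s => jump X s ω) '' Set.Ioc 0 t)

/-- `M_t = sup_{t ≤ s ≤ 1} m_s / a(s)`. -/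
def Mproc (Λ : Measure ℝ) (X : ℝ → Ω → ℝ) (t : ℝ) (ω : Ω) : ℝ :=
  sSup ((fun s => maxJump X s ω / normFn Λ s) '' Set.Icc t 1)

/-- `Y_t = sup_{t ≤ s ≤ 1} X̄_s / a(s)`. -/
def Yproc (Λ : Measure ℝ) (X : ℝ → Ω → ℝ) (t : ℝ) (ω : Ω) : ℝ :=
  sSup ((fun s => runSup X s ω / normFn Λ s) '' Set.Icc t 1)

/-- The `α = 1` centering function. -/
def centering (Λ : Measure ℝ) (t : ℝ) : ℝ :=
  if (∫⁻ y in Set.Ioc (0:ℝ) 1, ENNReal.ofReal y ∂Λ) < ⊤ then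
    t * ∫ y in Set.Ioc (0:ℝ) (normFn Λ t), y ∂Λ
  else
    -(t * ∫ y in Set.Ioc (normFn Λ t) 1, y ∂Λ)

end


open Real in

lemma myexp1 (x : ℝ) : |Real.exp x - 1| ≤ |x| * Real.exp |x| := by
  rcases le_or_gt 0 x with h | h
  · rw [abs_of_nonneg h, abs_of_nonneg (by linarith [Real.one_le_exp h])]
    have h1 := Real.add_one_le_exp (-x)
    have h2 := Real.exp_pos x
    have h3 : Real.exp (-x) * Real.exp x = 1 := by
      rw [← Real.exp_add]; simp
    nlinarith
  · rw [abs_of_neg h, abs_of_nonpos (by linarith [Real.exp_lt_one_iff.mpr h])]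
    have h1 := Real.add_one_le_exp x
    have h2 := Real.one_le_exp (by linarith : (0:ℝ) ≤ -x)
    nlinarith

lemma myexp2 (x : ℝ) : |Real.exp x - 1 - x| ≤ x ^ 2 * Real.exp |x| := by
  have h0 := Real.add_one_le_exp x
  rw [abs_of_nonneg (by linarith)]
  rcases le_or_gt 0 x with h | h
  · rw [abs_of_nonneg h]
    have h1 := myexp1 x
    rw [abs_of_nonneg h, abs_of_nonneg (by linarith [Real.one_le_exp h])] at h1
    nlinarith [Real.exp_pos x]
  · have h2 := Real.one_le_exp (abs_nonneg x)
    have h1 := Real.add_one_le_exp (-x)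
    have h3 : Real.exp x * Real.exp (-x) = 1 := by rw [← Real.exp_add]; simp
    have h4 : Real.exp x * (1 - x) ≤ 1 := by
      nlinarith [Real.exp_pos x]
    nlinarith [Real.exp_pos x, sq_nonneg x]


open Real

section
variable {Λ : Measure ℝ} {a : ℝ}

lemma hy2int (ha : 0 < a)
    (hBfin : (∫⁻ y in Set.Ioc (0:ℝ) a, ENNReal.ofReal (y ^ 2) ∂Λ) < ⊤) :
    IntegrableOn (fun y : ℝ => y ^ 2) (Set.Ioc 0 a) Λ := by
  refine ⟨(continuous_pow 2).aestronglyMeasurable, ?_⟩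
  rw [hasFiniteIntegral_iff_ofReal (ae_of_all _ fun y => sq_nonneg y)]
  exact hBfin

lemma int_of_sq_bound (ha : 0 < a)
    (hBfin : (∫⁻ y in Set.Ioc (0:ℝ) a, ENNReal.ofReal (y ^ 2) ∂Λ) < ⊤)
    {f : ℝ → ℝ} (hf : Continuous f) (C : ℝ)
    (h : ∀ y ∈ Set.Ioc (0:ℝ) a, ‖f y‖ ≤ C * y ^ 2) :
    IntegrableOn f (Set.Ioc 0 a) Λ := by
  refine Integrable.mono' ((hy2int ha hBfin).const_mul C) hf.aestronglyMeasurable ?_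
  exact (ae_restrict_iff' measurableSet_Ioc).2 (ae_of_all _ h)

-- pointwise bounds
lemma bd0 {θ y : ℝ} (R : ℝ) (hθ : |θ| ≤ R) (hy : y ∈ Set.Ioc (0:ℝ) a) :
    ‖Real.exp (θ * y) - 1 - θ * y‖ ≤ (R ^ 2 * Real.exp (R * a)) * y ^ 2 := by
  have h1 := myexp2 (θ * y)
  have hy0 := hy.1
  have hya := hy.2
  have hR : 0 ≤ R := le_trans (abs_nonneg θ) hθ
  have h2 : |θ * y| ≤ R * a := by
    rw [abs_mul, abs_of_pos hy0]
    exact mul_le_mul hθ hya hy0.le hR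
  have h3 : Real.exp |θ * y| ≤ Real.exp (R * a) := Real.exp_le_exp.2 h2
  have h4 : (θ * y) ^ 2 ≤ R ^ 2 * y ^ 2 := by
    have h5 : θ ^ 2 ≤ R ^ 2 := sq_le_sq' (by linarith [neg_abs_le θ]) (le_trans (le_abs_self θ) hθ)
    nlinarith [sq_nonneg y]
  calc ‖Real.exp (θ * y) - 1 - θ * y‖ ≤ (θ * y) ^ 2 * Real.exp |θ * y| := h1
    _ ≤ (R ^ 2 * y ^ 2) * Real.exp (R * a) := by
        nlinarith [Real.exp_pos |θ * y|, sq_nonneg (θ * y)]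
    _ = (R ^ 2 * Real.exp (R * a)) * y ^ 2 := by ring

lemma bd1 {θ y : ℝ} (R : ℝ) (hθ : |θ| ≤ R) (hy : y ∈ Set.Ioc (0:ℝ) a) :
    ‖y * (Real.exp (θ * y) - 1)‖ ≤ (R * Real.exp (R * a)) * y ^ 2 := by
  have h1 := myexp1 (θ * y)
  have hy0 := hy.1
  have hR : 0 ≤ R := le_trans (abs_nonneg θ) hθ
  have h2 : |θ * y| ≤ R * a := by
    rw [abs_mul, abs_of_pos hy0]
    exact mul_le_mul hθ hy.2 hy0.le hR
  have h3 : Real.exp |θ * y| ≤ Real.exp (R * a) := Real.exp_le_exp.2 h2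
  have h4 : |θ * y| ≤ R * y := by
    rw [abs_mul, abs_of_pos hy0]
    exact mul_le_mul_of_nonneg_right hθ hy0.le
  rw [norm_mul, Real.norm_eq_abs, Real.norm_eq_abs, abs_of_pos hy0]
  calc y * |Real.exp (θ * y) - 1| ≤ y * (|θ * y| * Real.exp |θ * y|) := by
        exact mul_le_mul_of_nonneg_left h1 hy0.le
    _ ≤ y * ((R * y) * Real.exp (R * a)) := by
        apply mul_le_mul_of_nonneg_left _ hy0.le
        exact mul_le_mul h4 h3 (Real.exp_pos _).le (by positivity)
    _ = (R * Real.exp (R * a)) * y ^ 2 := by ring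

lemma bd2 {θ y : ℝ} (R : ℝ) (hθ : |θ| ≤ R) (hy : y ∈ Set.Ioc (0:ℝ) a) :
    ‖y ^ 2 * Real.exp (θ * y)‖ ≤ Real.exp (R * a) * y ^ 2 := by
  have hy0 := hy.1
  have hR : 0 ≤ R := le_trans (abs_nonneg θ) hθ
  have h2 : θ * y ≤ R * a := by
    calc θ * y ≤ |θ| * y := mul_le_mul_of_nonneg_right (le_abs_self θ) hy0.le
      _ ≤ R * a := mul_le_mul hθ hy.2 hy0.le hR
  rw [norm_mul, Real.norm_eq_abs, Real.norm_eq_abs, abs_of_nonneg (sq_nonneg y),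
    abs_of_pos (Real.exp_pos _)]
  calc y ^ 2 * Real.exp (θ * y) ≤ y ^ 2 * Real.exp (R * a) := by
        exact mul_le_mul_of_nonneg_left (Real.exp_le_exp.2 h2) (sq_nonneg y)
    _ = Real.exp (R * a) * y ^ 2 := by ring

end

section
variable {Λ : Measure ℝ} {a : ℝ}

lemma ball_abs {θ₀ θ : ℝ} (h : θ ∈ Metric.ball θ₀ 1) : |θ| ≤ |θ₀| + 1 := by
  rw [Metric.mem_ball, Real.dist_eq] at h
  calc |θ| = |θ₀ + (θ - θ₀)| := by ring_nf
    _ ≤ |θ₀| + |θ - θ₀| := abs_add_le _ _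
    _ ≤ |θ₀| + 1 := by linarith

lemma hasDeriv0 (ha : 0 < a)
    (hBfin : (∫⁻ y in Set.Ioc (0:ℝ) a, ENNReal.ofReal (y ^ 2) ∂Λ) < ⊤) (θ₀ : ℝ) :
    HasDerivAt (fun θ => ∫ y in Set.Ioc (0:ℝ) a, (Real.exp (θ * y) - 1 - θ * y) ∂Λ)
      (∫ y in Set.Ioc (0:ℝ) a, y * (Real.exp (θ₀ * y) - 1) ∂Λ) θ₀ := by
  have key := hasDerivAt_integral_of_dominated_loc_of_deriv_le (μ := Λ.restrict (Set.Ioc 0 a))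
    (F := fun θ y => Real.exp (θ * y) - 1 - θ * y)
    (F' := fun θ y => y * (Real.exp (θ * y) - 1))
    (bound := fun y => ((|θ₀| + 1) * Real.exp ((|θ₀| + 1) * a)) * y ^ 2)
    (x₀ := θ₀) (Metric.ball_mem_nhds θ₀ one_pos) ?_ ?_ ?_ ?_ ?_ ?_
  · exact key.2
  · refine Eventually.of_forall fun θ => Continuous.aestronglyMeasurable (by fun_prop)
  · exact int_of_sq_bound ha hBfin (by fun_prop) (θ₀ ^ 2 * Real.exp (|θ₀| * a))
      (fun y hy => by simpa using bd0 |θ₀| le_rfl hy)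
  · exact Continuous.aestronglyMeasurable (by fun_prop)
  · refine (ae_restrict_iff' measurableSet_Ioc).2 (ae_of_all _ fun y hy θ hθ => ?_)
    exact bd1 (|θ₀| + 1) (ball_abs hθ) hy
  · exact (hy2int ha hBfin).const_mul _
  · refine ae_of_all _ fun y θ _ => ?_
    have h1 : HasDerivAt (fun θ : ℝ => θ * y) y θ := hasDerivAt_mul_const y
    have h2 := h1.exp
    have h3 := (h2.sub_const 1).sub h1
    exact h3.congr_deriv (by ring)

lemma hasDeriv1 (ha : 0 < a)
    (hBfin : (∫⁻ y in Set.Ioc (0:ℝ) a, ENNReal.ofReal (y ^ 2) ∂Λ) < ⊤) (θ₀ : ℝ) :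
    HasDerivAt (fun θ => ∫ y in Set.Ioc (0:ℝ) a, y * (Real.exp (θ * y) - 1) ∂Λ)
      (∫ y in Set.Ioc (0:ℝ) a, y ^ 2 * Real.exp (θ₀ * y) ∂Λ) θ₀ := by
  have key := hasDerivAt_integral_of_dominated_loc_of_deriv_le (μ := Λ.restrict (Set.Ioc 0 a))
    (F := fun θ y => y * (Real.exp (θ * y) - 1))
    (F' := fun θ y => y ^ 2 * Real.exp (θ * y))
    (bound := fun y => Real.exp ((|θ₀| + 1) * a) * y ^ 2)
    (x₀ := θ₀) (Metric.ball_mem_nhds θ₀ one_pos) ?_ ?_ ?_ ?_ ?_ ?_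
  · exact key.2
  · refine Eventually.of_forall fun θ => Continuous.aestronglyMeasurable (by fun_prop)
  · exact int_of_sq_bound ha hBfin (by fun_prop) (|θ₀| * Real.exp (|θ₀| * a))
      (fun y hy => bd1 |θ₀| le_rfl hy)
  · exact Continuous.aestronglyMeasurable (by fun_prop)
  · refine (ae_restrict_iff' measurableSet_Ioc).2 (ae_of_all _ fun y hy θ hθ => ?_)
    exact bd2 (|θ₀| + 1) (ball_abs hθ) hy
  · exact (hy2int ha hBfin).const_mul _
  · refine ae_of_all _ fun y θ _ => ?_
    have h1 : HasDerivAt (fun θ : ℝ => θ * y) y θ := hasDerivAt_mul_const y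
    have h3 := (h1.exp.sub_const 1).const_mul y
    exact h3.congr_deriv (by ring)

lemma cont2 (ha : 0 < a)
    (hBfin : (∫⁻ y in Set.Ioc (0:ℝ) a, ENNReal.ofReal (y ^ 2) ∂Λ) < ⊤) :
    Continuous (fun θ => ∫ y in Set.Ioc (0:ℝ) a, y ^ 2 * Real.exp (θ * y) ∂Λ) := by
  rw [continuous_iff_continuousAt]
  intro θ₀
  refine continuousAt_of_dominated (bound := fun y => Real.exp ((|θ₀| + 1) * a) * y ^ 2)
    (Eventually.of_forall fun θ => Continuous.aestronglyMeasurable (by fun_prop)) ?_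
    ((hy2int ha hBfin).const_mul _) (ae_of_all _ fun y => by fun_prop)
  filter_upwards [Metric.ball_mem_nhds θ₀ one_pos] with θ hθ
  refine (ae_restrict_iff' measurableSet_Ioc).2 (ae_of_all _ fun y hy => ?_)
  exact bd2 (|θ₀| + 1) (ball_abs hθ) hy

end

/-- **Proposition (properties of the cumulant `ξ`).** The function
`ξ(θ) = t ∫_{(0,a]} (e^{θy} − 1 − θy) Λ(dy)` is finite (the integrand is integrable) and
twice differentiable on `ℝ`, its derivative `ξ'(θ) = t ∫_{(0,a]} y(e^{θy} − 1) Λ(dy)` is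
strictly increasing with `ξ'(0) = 0` and `ξ'(θ) → ∞` as `θ → ∞`; hence for each `x > 0`
there is a unique `η(x) > 0` with `ξ'(η(x)) = x`, and for every `b > 0`,
`ξ(η(b)) − η(b) b = −∫_0^b η(x) dx`; in particular
`inf_{θ>0} exp(ξ(θ) − θ b) ≤ exp(−∫_0^b η(x) dx)`. -/
theorem cumulant_properties
    (Λ : Measure ℝ) (a t : ℝ)
    (hΛ0 : Λ (Set.Iic 0) = 0)
    (ha : 0 < a) (ht : 0 < t)
    (hBpos : 0 < ∫ y in Set.Ioc (0:ℝ) a, y ^ 2 ∂Λ)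
    (hBfin : (∫⁻ y in Set.Ioc (0:ℝ) a, ENNReal.ofReal (y ^ 2) ∂Λ) < ⊤) :
    (∀ θ : ℝ, IntegrableOn (fun y => Real.exp (θ * y) - 1 - θ * y) (Set.Ioc 0 a) Λ) ∧
    ∃ D : ℝ → ℝ,
      (∀ θ : ℝ, D θ = t * ∫ y in Set.Ioc (0:ℝ) a, y * (Real.exp (θ * y) - 1) ∂Λ) ∧
      (∀ θ : ℝ, HasDerivAt
          (fun θ' => t * ∫ y in Set.Ioc (0:ℝ) a, (Real.exp (θ' * y) - 1 - θ' * y) ∂Λ)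
          (D θ) θ) ∧
      (∀ θ : ℝ, DifferentiableAt ℝ D θ) ∧
      StrictMono D ∧ D 0 = 0 ∧ Tendsto D atTop atTop ∧
      ∃ η : ℝ → ℝ,
        (∀ x : ℝ, 0 < x → 0 < η x ∧ D (η x) = x ∧ ∀ θ : ℝ, 0 < θ → D θ = x → θ = η x) ∧
        ∀ b : ℝ, 0 < b →
          ((t * ∫ y in Set.Ioc (0:ℝ) a, (Real.exp (η b * y) - 1 - η b * y) ∂Λ)
              - η b * b = -∫ x in (0:ℝ)..b, η x) ∧
          (⨅ θ : Set.Ioi (0:ℝ),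
              Real.exp ((t * ∫ y in Set.Ioc (0:ℝ) a,
                (Real.exp (θ.1 * y) - 1 - θ.1 * y) ∂Λ) - θ.1 * b))
            ≤ Real.exp (-∫ x in (0:ℝ)..b, η x) := by
  -- integrability for every θ
  have int0 : ∀ θ : ℝ, IntegrableOn (fun y => Real.exp (θ * y) - 1 - θ * y) (Set.Ioc 0 a) Λ :=
    fun θ => int_of_sq_bound ha hBfin (by fun_prop) (|θ| ^ 2 * Real.exp (|θ| * a))
      (fun y hy => bd0 |θ| le_rfl hy)
  have int1 : ∀ θ : ℝ, IntegrableOn (fun y => y * (Real.exp (θ * y) - 1)) (Set.Ioc 0 a) Λ :=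
    fun θ => int_of_sq_bound ha hBfin (by fun_prop) (|θ| * Real.exp (|θ| * a))
      (fun y hy => bd1 |θ| le_rfl hy)
  refine ⟨int0, ?_⟩
  set D : ℝ → ℝ := fun θ => t * ∫ y in Set.Ioc (0:ℝ) a, y * (Real.exp (θ * y) - 1) ∂Λ with hDdef
  set ξ : ℝ → ℝ :=
    fun θ => t * ∫ y in Set.Ioc (0:ℝ) a, (Real.exp (θ * y) - 1 - θ * y) ∂Λ with hξdef
  set I2 : ℝ → ℝ := fun θ => t * ∫ y in Set.Ioc (0:ℝ) a, y ^ 2 * Real.exp (θ * y) ∂Λ with hI2def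
  have hξder : ∀ θ : ℝ, HasDerivAt ξ (D θ) θ :=
    fun θ => (hasDeriv0 ha hBfin θ).const_mul t
  have hDder : ∀ θ : ℝ, HasDerivAt D (I2 θ) θ :=
    fun θ => (hasDeriv1 ha hBfin θ).const_mul t
  have hDdiff : ∀ θ : ℝ, DifferentiableAt ℝ D θ := fun θ => (hDder θ).differentiableAt
  have hDcont : Continuous D :=
    continuous_iff_continuousAt.2 fun θ => (hDdiff θ).continuousAt
  have hI2cont : Continuous I2 := continuous_const.mul (cont2 ha hBfin)
  have hD0 : D 0 = 0 := by simp [hDdef]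
  -- strict monotonicity
  have hmono : StrictMono D := by
    intro θ₁ θ₂ h12
    set c := (θ₂ - θ₁) * Real.exp (-(|θ₁| * a)) with hcdef
    have hcpos : 0 < c := by
      apply mul_pos (by linarith) (Real.exp_pos _)
    have hle : ∫ y in Set.Ioc (0:ℝ) a, c * y ^ 2 ∂Λ ≤
        ∫ y in Set.Ioc (0:ℝ) a,
          (y * (Real.exp (θ₂ * y) - 1) - y * (Real.exp (θ₁ * y) - 1)) ∂Λ := by
      apply setIntegral_mono_on ((hy2int ha hBfin).const_mul c) ((int1 θ₂).sub (int1 θ₁))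
        measurableSet_Ioc
      intro y hy
      have h1 : Real.exp (-(|θ₁| * a)) ≤ Real.exp (θ₁ * y) := by
        apply Real.exp_le_exp.2
        nlinarith [neg_abs_le θ₁, abs_nonneg θ₁, hy.1, hy.2]
      have h2 : (θ₂ - θ₁) * y ≤ Real.exp ((θ₂ - θ₁) * y) - 1 := by
        linarith [Real.add_one_le_exp ((θ₂ - θ₁) * y)]
      have h3 : Real.exp (θ₂ * y) = Real.exp (θ₁ * y) * Real.exp ((θ₂ - θ₁) * y) := by
        rw [← Real.exp_add]; ring_nf
      have hΔy : (0:ℝ) ≤ (θ₂ - θ₁) * y := by nlinarith [hy.1]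
      have key : c * y ^ 2 ≤ y * (Real.exp (θ₂ * y) - Real.exp (θ₁ * y)) := by
        calc c * y ^ 2 = y * (Real.exp (-(|θ₁| * a)) * ((θ₂ - θ₁) * y)) := by
              rw [hcdef]; ring
          _ ≤ y * (Real.exp (θ₁ * y) * ((θ₂ - θ₁) * y)) :=
              mul_le_mul_of_nonneg_left (mul_le_mul_of_nonneg_right h1 hΔy) hy.1.le
          _ ≤ y * (Real.exp (θ₁ * y) * (Real.exp ((θ₂ - θ₁) * y) - 1)) :=
              mul_le_mul_of_nonneg_left
                (mul_le_mul_of_nonneg_left h2 (Real.exp_pos _).le) hy.1.le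
          _ = y * (Real.exp (θ₂ * y) - Real.exp (θ₁ * y)) := by rw [h3]; ring
      show c * y ^ 2 ≤ y * (Real.exp (θ₂ * y) - 1) - y * (Real.exp (θ₁ * y) - 1)
      nlinarith [key]
    rw [MeasureTheory.integral_const_mul,
      integral_sub (int1 θ₂) (int1 θ₁)] at hle
    have : (0:ℝ) < c * ∫ y in Set.Ioc (0:ℝ) a, y ^ 2 ∂Λ := mul_pos hcpos hBpos
    have h4 : (∫ y in Set.Ioc (0:ℝ) a, y * (Real.exp (θ₁ * y) - 1) ∂Λ) <
        ∫ y in Set.Ioc (0:ℝ) a, y * (Real.exp (θ₂ * y) - 1) ∂Λ := by linarith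
    exact mul_lt_mul_of_pos_left h4 ht
  -- tendsto atTop
  have htop : Tendsto D atTop atTop := by
    have hlin : Tendsto (fun θ : ℝ => (t * ∫ y in Set.Ioc (0:ℝ) a, y ^ 2 ∂Λ) * θ)
        atTop atTop := Tendsto.const_mul_atTop (by positivity) tendsto_id
    apply tendsto_atTop_mono' atTop ?_ hlin
    filter_upwards [eventually_ge_atTop (0:ℝ)] with θ hθ
    have hle : ∫ y in Set.Ioc (0:ℝ) a, θ * y ^ 2 ∂Λ ≤
        ∫ y in Set.Ioc (0:ℝ) a, y * (Real.exp (θ * y) - 1) ∂Λ := by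
      apply setIntegral_mono_on ((hy2int ha hBfin).const_mul θ) (int1 θ) measurableSet_Ioc
      intro y hy
      have h2 : θ * y ≤ Real.exp (θ * y) - 1 := by linarith [Real.add_one_le_exp (θ * y)]
      have h4 := mul_le_mul_of_nonneg_left h2 hy.1.le
      nlinarith [h4]
    rw [MeasureTheory.integral_const_mul] at hle
    calc (t * ∫ y in Set.Ioc (0:ℝ) a, y ^ 2 ∂Λ) * θ
        = t * (θ * ∫ y in Set.Ioc (0:ℝ) a, y ^ 2 ∂Λ) := by ring
      _ ≤ D θ := mul_le_mul_of_nonneg_left hle ht.le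
  -- existence of η
  have hex : ∀ x : ℝ, 0 < x → ∃ θ : ℝ, 0 < θ ∧ D θ = x := by
    intro x hx
    obtain ⟨N, hN⟩ := (htop.eventually_ge_atTop x).exists
    have hmem : x ∈ Set.Icc (D 0) (D N) := ⟨by rw [hD0]; exact hx.le, hN⟩
    have h0N : (0:ℝ) ≤ N := by
      by_contra h
      push_neg at h
      have := hmono h
      rw [hD0] at this
      linarith [hN]
    obtain ⟨θ, hθmem, hθx⟩ := intermediate_value_Icc h0N hDcont.continuousOn hmem
    refine ⟨θ, ?_, hθx⟩
    have : D 0 < D θ := by rw [hD0, hθx]; exact hx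
    exact hmono.lt_iff_lt.1 this
  set η : ℝ → ℝ := fun x => if hx : 0 < x then (hex x hx).choose else 0 with hηdef
  have hηspec : ∀ x : ℝ, 0 < x → 0 < η x ∧ D (η x) = x := by
    intro x hx
    rw [hηdef]
    simp only [dif_pos hx]
    exact ⟨(hex x hx).choose_spec.1, (hex x hx).choose_spec.2⟩
  have hη0 : η 0 = 0 := by rw [hηdef]; simp
  -- continuity of η on Ici 0
  have hηcont : ContinuousOn η (Set.Ici 0) := by
    intro x₀ hx₀
    rcases eq_or_lt_of_le (Set.mem_Ici.mp hx₀) with h0 | hx₀pos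
    · subst h0
      rw [Metric.continuousWithinAt_iff]
      intro ε hε
      have hDε : 0 < D ε := by have := hmono hε; rwa [hD0] at this
      refine ⟨D ε, hDε, ?_⟩
      intro x hx hdist
      rw [Real.dist_eq, sub_zero] at hdist
      rw [Real.dist_eq, hη0, sub_zero]
      rcases eq_or_lt_of_le (Set.mem_Ici.mp hx) with h0x | hxpos
      · rw [← h0x, hη0]
        simpa using hε
      · obtain ⟨hp, hDx⟩ := hηspec x hxpos
        have hxlt : x < D ε := by rwa [abs_of_pos hxpos] at hdist
        have : η x < ε := hmono.lt_iff_lt.1 (by rw [hDx]; exact hxlt)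
        rwa [abs_of_pos hp]
    · apply ContinuousAt.continuousWithinAt
      rw [Metric.continuousAt_iff]
      intro ε hε
      obtain ⟨hθ₀pos, hθ₀⟩ := hηspec x₀ hx₀pos
      set θ₀ := η x₀ with hθ₀def
      set ε₁ := min (ε / 2) (θ₀ / 2) with hε₁def
      have hε₁pos : 0 < ε₁ := lt_min (by linarith) (by linarith)
      have hε₁le : ε₁ ≤ ε / 2 := min_le_left _ _
      have hε₁le' : ε₁ ≤ θ₀ / 2 := min_le_right _ _
      have hθ₁pos : 0 < θ₀ - ε₁ := by linarith
      have hlow : D (θ₀ - ε₁) < x₀ := by rw [← hθ₀]; exact hmono (by linarith)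
      have hhigh : x₀ < D (θ₀ + ε₁) := by rw [← hθ₀]; exact hmono (by linarith)
      refine ⟨min (x₀ - D (θ₀ - ε₁)) (D (θ₀ + ε₁) - x₀),
        lt_min (by linarith) (by linarith), ?_⟩
      intro x hdist
      rw [Real.dist_eq] at hdist
      have hd1 := abs_lt.1 hdist
      have hm1 := min_le_left (x₀ - D (θ₀ - ε₁)) (D (θ₀ + ε₁) - x₀)
      have hm2 := min_le_right (x₀ - D (θ₀ - ε₁)) (D (θ₀ + ε₁) - x₀)
      have h1 : D (θ₀ - ε₁) < x := by linarith
      have h2 : x < D (θ₀ + ε₁) := by linarith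
      have hxpos : 0 < x := by
        have : D 0 < D (θ₀ - ε₁) := hmono hθ₁pos
        rw [hD0] at this
        linarith
      obtain ⟨hp, hDx⟩ := hηspec x hxpos
      have l1 : θ₀ - ε₁ < η x := hmono.lt_iff_lt.1 (by rw [hDx]; exact h1)
      have l2 : η x < θ₀ + ε₁ := hmono.lt_iff_lt.1 (by rw [hDx]; exact h2)
      rw [Real.dist_eq, abs_lt]
      constructor <;> linarith
  refine ⟨D, fun θ => rfl, hξder, hDdiff, hmono, hD0, htop, η,
    fun x hx => ⟨(hηspec x hx).1, (hηspec x hx).2, ?_⟩, ?_⟩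
  · intro θ hθ hDθ
    exact hmono.injective (by rw [hDθ, (hηspec x hx).2])
  · intro b hb
    obtain ⟨hcpos, hDc⟩ := hηspec b hb
    set c := η b with hcdef2
    -- FTC: ∫₀^c D = ξ c
    have hξ0 : ξ 0 = 0 := by simp [hξdef]
    have hftc : ∫ θ in (0:ℝ)..c, D θ = ξ c - ξ 0 :=
      intervalIntegral.integral_eq_sub_of_hasDerivAt (fun θ _ => hξder θ)
        (hDcont.intervalIntegrable 0 c)
    -- substitution
    have himg : D '' (Set.uIcc 0 c) ⊆ Set.Ici 0 := by
      rintro _ ⟨θ, hθ, rfl⟩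
      rw [Set.uIcc_of_le hcpos.le] at hθ
      have := hmono.monotone hθ.1
      rw [hD0] at this
      exact this
    have hsubst : (∫ θ in (0:ℝ)..c, I2 θ • (η ∘ D) θ) = ∫ x in (D 0)..(D c), η x :=
      intervalIntegral.integral_comp_smul_deriv' (fun θ _ => hDder θ)
        hI2cont.continuousOn (hηcont.mono himg)
    rw [hD0, hDc] at hsubst
    have hcongr : (∫ θ in (0:ℝ)..c, I2 θ • (η ∘ D) θ) = ∫ θ in (0:ℝ)..c, θ * I2 θ := by
      apply intervalIntegral.integral_congr
      intro θ hθ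
      rw [Set.uIcc_of_le hcpos.le] at hθ
      simp only [Function.comp, smul_eq_mul]
      rcases eq_or_lt_of_le hθ.1 with h0θ | hθpos
      · rw [← h0θ, hD0, hη0]; ring
      · have hDθpos : 0 < D θ := by rw [← hD0]; exact hmono hθpos
        obtain ⟨hp', hDx'⟩ := hηspec (D θ) hDθpos
        have : η (D θ) = θ := hmono.injective hDx'
        rw [this]; ring
    -- integration by parts
    have hparts : (∫ θ in (0:ℝ)..c, θ * I2 θ) =
        c * D c - 0 * D 0 - ∫ θ in (0:ℝ)..c, 1 * D θ :=
      intervalIntegral.integral_mul_deriv_eq_deriv_mul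
        (fun θ _ => hasDerivAt_id θ) (fun θ _ => hDder θ)
        (intervalIntegrable_const) (hI2cont.intervalIntegrable 0 c)
    simp only [one_mul, zero_mul, sub_zero] at hparts
    rw [hftc, hξ0, sub_zero, hDc] at hparts
    have hkey : ξ c - c * b = -∫ x in (0:ℝ)..b, η x := by
      rw [← hsubst, hcongr, hparts]
      ring
    constructor
    · exact hkey
    · have hbdd : BddBelow (Set.range fun θ : Set.Ioi (0:ℝ) =>
          Real.exp (ξ θ.1 - θ.1 * b)) := by
        refine ⟨0, ?_⟩
        rintro x ⟨θ, rfl⟩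
        exact (Real.exp_pos _).le
      have hle := ciInf_le hbdd (⟨c, hcpos⟩ : Set.Ioi (0:ℝ))
      calc (⨅ θ : Set.Ioi (0:ℝ), Real.exp (ξ θ.1 - θ.1 * b)) ≤
            Real.exp (ξ c - c * b) := hle
        _ = Real.exp (-∫ x in (0:ℝ)..b, η x) := by rw [hkey]
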